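/- There exists a regular language L_A ⊆ Σ* such that, setting L' = L_A ∩ L_Z(ω): (a) L_R(ω) ⊆ L'; and (b) every word w ∈ L' \ L_R(ω) admits a factorization w = w₁ u w₂ v w₃ such that (1) φ(u) is stable, ω(u) > 0, and the weight of every prefix of w₁u is nonnegative, and (2) φ(v) is stable, ω(v) < 0, and the weight of every suffix of v w₃ is nonpositive. -/

import Mathlib

/-- A matrix `M` is *stable* if `rank M = rank M²`. -/
def MatStable {d : ℕ} (M : Matrix (Fin d) (Fin d) ℚ) : Prop :=
  M.rank = (M * M).rank

/-- The coverability language of `ω`: words all of whose prefixes have nonnegative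
weight. -/
def coverLang {α : Type*} (ω : List α → ℤ) : Set (List α) :=
  {w | ∀ u : List α, u <+: w → 0 ≤ ω u}

/-- The reachability language of `ω`: words of weight zero all of whose prefixes have
nonnegative weight. -/
def reachLang {α : Type*} (ω : List α → ℤ) : Set (List α) :=
  {w | ω w = 0 ∧ ∀ u : List α, u <+: w → 0 ≤ ω u}

/-- The zero-weight language of `ω`. -/
def zeroLang {α : Type*} (ω : List α → ℤ) : Set (List α) :=
  {w | ω w = 0}

namespace RRA

open Module Submodule


variable {d : ℕ}

/-- rank of image of a submodule plus dim of intersection with kernel. -/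
lemma finrank_map_add (f : (Fin d → ℚ) →ₗ[ℚ] (Fin d → ℚ)) (p : Submodule ℚ (Fin d → ℚ)) :
    finrank ℚ (p.map f) + finrank ℚ (LinearMap.ker f ⊓ p : Submodule ℚ (Fin d → ℚ))
      = finrank ℚ p := by
  have h := LinearMap.finrank_range_add_finrank_ker (f.comp p.subtype)
  have h1 : LinearMap.range (f.comp p.subtype) = p.map f := by
    rw [LinearMap.range_comp, Submodule.range_subtype]
  have h2 : LinearMap.ker (f.comp p.subtype)
      = Submodule.comap p.subtype (LinearMap.ker f ⊓ p) := by
    rw [LinearMap.ker_comp]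
    ext x
    simp [x.2]
  have h3 : finrank ℚ (LinearMap.ker (f.comp p.subtype))
      = finrank ℚ (LinearMap.ker f ⊓ p : Submodule ℚ (Fin d → ℚ)) := by
    rw [h2]
    exact (Submodule.comapSubtypeEquivOfLe inf_le_right).finrank_eq
  rw [h1, h3] at h
  simpa using h

lemma rank_mul_self_add (B : Matrix (Fin d) (Fin d) ℚ) :
    (B * B).rank
        + finrank ℚ (LinearMap.ker B.mulVecLin ⊓ LinearMap.range B.mulVecLin :
            Submodule ℚ (Fin d → ℚ))
      = B.rank := by
  have : LinearMap.range (B * B).mulVecLin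
      = (LinearMap.range B.mulVecLin).map B.mulVecLin := by
    rw [Matrix.mulVecLin_mul, LinearMap.range_comp]
  rw [Matrix.rank, this, Matrix.rank]
  exact finrank_map_add _ _

lemma matStable_iff (B : Matrix (Fin d) (Fin d) ℚ) :
    MatStable B ↔
      LinearMap.ker B.mulVecLin ⊓ LinearMap.range B.mulVecLin = ⊥ := by
  have h := rank_mul_self_add B
  constructor
  · intro hs
    rw [MatStable] at hs
    have : finrank ℚ (LinearMap.ker B.mulVecLin ⊓ LinearMap.range B.mulVecLin :
        Submodule ℚ (Fin d → ℚ)) = 0 := by omega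
    exact Submodule.finrank_eq_zero.mp this
  · intro hb
    rw [hb] at h
    simp only [finrank_bot, add_zero] at h
    exact h.symm

lemma matStable_of_rank_zero {B : Matrix (Fin d) (Fin d) ℚ} (h : B.rank = 0) : MatStable B := by
  have h2 : (B * B).rank ≤ B.rank := Matrix.rank_mul_le_left B B
  rw [MatStable]; omega



variable {d : ℕ}

lemma bollobas {d r M' : ℕ} (hrd : r ≤ d)
    (V K : Fin M' → Submodule ℚ (Fin d → ℚ))
    (hV : ∀ i, finrank ℚ (V i) = r) (hK : ∀ i, finrank ℚ (K i) = d - r)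
    (hdiag : ∀ i, V i ⊓ K i = ⊥)
    (hoff : ∀ i j : Fin M', i < j → V i ⊓ K j ≠ ⊥) : M' ≤ d ^ r := by
  classical
  set s := d - r with hs
  let e : (Fin r ⊕ Fin s) ≃ Fin d := finSumFinEquiv.trans (finCongr (by omega))
  let C : Fin M' → Fin r → (Fin d → ℚ) := fun i k =>
    ((Module.finBasisOfFinrankEq ℚ (V i) (hV i)) k : Fin d → ℚ)
  let E : Fin M' → Fin s → (Fin d → ℚ) := fun j k =>
    ((Module.finBasisOfFinrankEq ℚ (K j) (hK j)) k : Fin d → ℚ)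
  have hCli : ∀ i, LinearIndependent ℚ (C i) := fun i =>
    ((Module.finBasisOfFinrankEq ℚ (V i) (hV i)).linearIndependent).map'
      (V i).subtype (Submodule.ker_subtype _)
  have hEli : ∀ j, LinearIndependent ℚ (E j) := fun j =>
    ((Module.finBasisOfFinrankEq ℚ (K j) (hK j)).linearIndependent).map'
      (K j).subtype (Submodule.ker_subtype _)
  have hCspan : ∀ i, Submodule.span ℚ (Set.range (C i)) = V i := by
    intro i
    have : Set.range (C i) = (V i).subtype ''
        (Set.range (Module.finBasisOfFinrankEq ℚ (V i) (hV i))) := by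
      rw [← Set.range_comp]; rfl
    rw [this, Submodule.span_image, Basis.span_eq, Submodule.map_top,
      Submodule.range_subtype]
  have hEspan : ∀ j, Submodule.span ℚ (Set.range (E j)) = K j := by
    intro j
    have : Set.range (E j) = (K j).subtype ''
        (Set.range (Module.finBasisOfFinrankEq ℚ (K j) (hK j))) := by
      rw [← Set.range_comp]; rfl
    rw [this, Submodule.span_image, Basis.span_eq, Submodule.map_top,
      Submodule.range_subtype]
  let A : Fin M' → Fin M' → Matrix (Fin d) (Fin d) ℚ := fun i j =>
    Matrix.of fun p q => Sum.elim (fun k => C i k p) (fun k => E j k p) (e.symm q)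
  -- determinant criterion
  have detiff : ∀ i j, (A i j).det ≠ 0 ↔ V i ⊓ K j = ⊥ := by
    intro i j
    have hcols : (fun q : Fin d => fun p => A i j p q) ∘ e
        = Sum.elim (C i) (E j) := by
      funext z
      cases z with
      | inl k => funext p; simp [A, Equiv.symm_apply_apply]
      | inr k => funext p; simp [A, Equiv.symm_apply_apply]
    have h1 : (∃ v, v ≠ 0 ∧ (A i j).mulVec v = 0) ↔ (A i j).det = 0 :=
      Matrix.exists_mulVec_eq_zero_iff
    have hbridge : ∀ v : Fin d → ℚ,
        (∑ q, v q • (fun p => A i j p q)) = (A i j).mulVec v := by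
      intro v
      funext p
      simp [Matrix.mulVec, dotProduct, Finset.sum_apply, mul_comm]
    have h2 : LinearIndependent ℚ (fun q : Fin d => fun p => A i j p q)
        ↔ ¬ (∃ v, v ≠ 0 ∧ (A i j).mulVec v = 0) := by
      rw [Fintype.linearIndependent_iff]
      constructor
      · rintro h ⟨v, hv0, hv⟩
        exact hv0 (funext (h v (by rw [hbridge]; exact hv)))
      · intro h g hg q
        by_contra hgq
        exact h ⟨g, fun h0 => hgq (by rw [h0]; rfl), by rw [← hbridge]; exact hg⟩
    have h3 : LinearIndependent ℚ (fun q : Fin d => fun p => A i j p q)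
        ↔ LinearIndependent ℚ (Sum.elim (C i) (E j)) := by
      rw [← hcols, linearIndependent_equiv e]
    have h4 : LinearIndependent ℚ (Sum.elim (C i) (E j)) ↔ V i ⊓ K j = ⊥ := by
      rw [linearIndependent_sum, ← disjoint_iff]
      simp only [Sum.elim_comp_inl, Sum.elim_comp_inr, hCspan, hEspan]
      constructor
      · rintro ⟨-, -, hd⟩; exact hd
      · intro hd; exact ⟨hCli i, hEli j, hd⟩
    rw [← h4, ← h3, h2, h1]
  -- the tensor vectors and the detecting functionals
  let x : Fin M' → ((Fin r → Fin d) → ℚ) := fun i g => ∏ k, C i k (g k)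
  let Φ : Fin M' → (((Fin r → Fin d) → ℚ) →ₗ[ℚ] ℚ) := fun j =>
    ∑ σ : Equiv.Perm (Fin d),
      (((Equiv.Perm.sign σ : ℤ) : ℚ) * ∏ k : Fin s, E j k (σ (e (Sum.inr k)))) •
        LinearMap.proj (R := ℚ) (φ := fun _ : (Fin r → Fin d) => ℚ)
          (fun k => σ (e (Sum.inl k)))
  have hΦ : ∀ i j, Φ j (x i) = (A i j).det := by
    intro i j
    rw [Matrix.det_apply']
    simp only [Φ, LinearMap.sum_apply, LinearMap.smul_apply, LinearMap.proj_apply,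
      smul_eq_mul]
    refine Finset.sum_congr rfl fun σ _ => ?_
    have hprod : ∏ p, A i j (σ p) p
        = (∏ k : Fin r, C i k (σ (e (Sum.inl k)))) *
          (∏ k : Fin s, E j k (σ (e (Sum.inr k)))) := by
      rw [← Equiv.prod_comp e (fun p => A i j (σ p) p), Fintype.prod_sum_type]
      congr 1
      · refine Finset.prod_congr rfl fun k _ => ?_
        simp [A, Equiv.symm_apply_apply]
      · refine Finset.prod_congr rfl fun k _ => ?_
        simp [A, Equiv.symm_apply_apply]
    rw [hprod]
    simp only [x]
    ring
  -- linear independence of the x i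
  have hxli : LinearIndependent ℚ x := by
    rw [Fintype.linearIndependent_iff]
    intro g hg
    by_contra hex
    push_neg at hex
    obtain ⟨i₀, hi₀⟩ := hex
    have hSS : (Finset.univ.filter (fun i => g i ≠ 0)).Nonempty :=
      ⟨i₀, by simp [hi₀]⟩
    set j := (Finset.univ.filter (fun i => g i ≠ 0)).max' hSS with hj
    have hjmem : g j ≠ 0 := by
      have := Finset.max'_mem _ hSS
      simpa using this
    have hjmax : ∀ i, g i ≠ 0 → i ≤ j := by
      intro i hi
      exact Finset.le_max' _ i (by simp [hi])
    have h0 : Φ j (∑ i, g i • x i) = 0 := by rw [hg]; simp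
    rw [map_sum] at h0
    simp only [map_smul, smul_eq_mul] at h0
    have hsingle : ∑ i, g i * Φ j (x i) = g j * Φ j (x j) := by
      refine Finset.sum_eq_single j ?_ (by simp)
      intro i _ hij
      by_cases hgi : g i = 0
      · rw [hgi, zero_mul]
      · have hilt : i < j := lt_of_le_of_ne (hjmax i hgi) hij
        have : (A i j).det = 0 := by
          by_contra hdet
          exact hoff i j hilt ((detiff i j).mp hdet)
        rw [hΦ, this, mul_zero]
    rw [hsingle, hΦ] at h0
    have hdj : (A j j).det ≠ 0 := (detiff j j).mpr (hdiag j)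
    exact hjmem (by rcases mul_eq_zero.mp h0 with h | h; exact h; exact absurd h hdj)
  have hcard := hxli.fintype_card_le_finrank
  simpa [Module.finrank_pi, Fintype.card_fun] using hcard







lemma finrank_pi_fin (d : ℕ) : finrank ℚ (Fin d → ℚ) = d := by
  simp [Module.finrank_pi]

lemma equalRank {d r m : ℕ} (hr : 1 ≤ r) (hm : d ^ d + 2 ≤ m)
    (M : ℕ → ℕ → Matrix (Fin d) (Fin d) ℚ)
    (hmul : ∀ a b c, a ≤ b → b ≤ c → c ≤ m → M a c = M a b * M b c)
    (hrank : ∀ a b, a < b → b ≤ m → (M a b).rank = r) :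
    ∃ a b, a < b ∧ b ≤ m ∧ MatStable (M a b) := by
  by_contra hno
  push_neg at hno
  set f : ℕ → ℕ → ((Fin d → ℚ) →ₗ[ℚ] (Fin d → ℚ)) := fun a b => (M a b).mulVecLin with hf
  have hcomp : ∀ a b c, a ≤ b → b ≤ c → c ≤ m → f a c = (f a b).comp (f b c) := by
    intro a b c hab hbc hcm
    rw [hf]
    simp only
    rw [hmul a b c hab hbc hcm, Matrix.mulVecLin_mul]
  have hrk : ∀ a b, a < b → b ≤ m → finrank ℚ (LinearMap.range (f a b)) = r := by
    intro a b hab hbm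
    exact hrank a b hab hbm
  have hkerdim : ∀ a b, a < b → b ≤ m →
      finrank ℚ (LinearMap.ker (f a b)) = d - r := by
    intro a b hab hbm
    have h := LinearMap.finrank_range_add_finrank_ker (f a b)
    rw [hrk a b hab hbm, finrank_pi_fin] at h
    have hrd : r ≤ d := by
      have := Submodule.finrank_le (LinearMap.range (f a b))
      rw [hrk a b hab hbm, finrank_pi_fin] at this
      exact this
    omega
  have hrd : r ≤ d := by
    have := Submodule.finrank_le (LinearMap.range (f 0 m))
    rw [hrk 0 m (by omega) le_rfl, finrank_pi_fin] at this
    exact this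
  have rangeConst : ∀ a b, a < b → b ≤ m →
      LinearMap.range (f a b) = LinearMap.range (f a m) := by
    intro a b hab hbm
    rcases eq_or_lt_of_le hbm with h | h
    · rw [h]
    · have hle : LinearMap.range (f a m) ≤ LinearMap.range (f a b) := by
        rw [hcomp a b m (le_of_lt hab) hbm le_rfl]
        exact LinearMap.range_comp_le_range _ _
      have := Submodule.eq_of_le_of_finrank_le hle
        (by rw [hrk a b hab hbm, hrk a m (lt_of_lt_of_le hab hbm) le_rfl])
      exact this.symm
  have kerConst : ∀ a b, 0 < a → a < b → b ≤ m →
      LinearMap.ker (f a b) = LinearMap.ker (f 0 b) := by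
    intro a b ha hab hbm
    have hle : LinearMap.ker (f a b) ≤ LinearMap.ker (f 0 b) := by
      intro x hx
      rw [LinearMap.mem_ker] at hx ⊢
      rw [hcomp 0 a b (by omega) (le_of_lt hab) hbm]
      simp [hx]
    exact Submodule.eq_of_le_of_finrank_le hle
      (by rw [hkerdim a b hab hbm, hkerdim 0 b (by omega) hbm])
  have diag : ∀ t, 0 < t → t < m →
      LinearMap.ker (f 0 t) ⊓ LinearMap.range (f t m) = ⊥ := by
    intro t ht htm
    have h := finrank_map_add (f 0 t) (LinearMap.range (f t m))
    have hmap : (LinearMap.range (f t m)).map (f 0 t)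
        = LinearMap.range (f 0 m) := by
      rw [hcomp 0 t m (by omega) (le_of_lt htm) le_rfl, LinearMap.range_comp]
    rw [hmap, hrk 0 m (by omega) le_rfl, hrk t m htm le_rfl] at h
    have : finrank ℚ (LinearMap.ker (f 0 t) ⊓ LinearMap.range (f t m) :
        Submodule ℚ (Fin d → ℚ)) = 0 := by omega
    exact Submodule.finrank_eq_zero.mp this
  have off : ∀ s t, 0 < s → s < t → t < m →
      LinearMap.ker (f 0 t) ⊓ LinearMap.range (f s m) ≠ ⊥ := by
    intro s t hs hst htm
    have hns := hno s t hst (le_of_lt htm)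
    rw [matStable_iff] at hns
    have h1 : LinearMap.ker ((M s t).mulVecLin) = LinearMap.ker (f 0 t) :=
      kerConst s t hs hst (le_of_lt htm)
    have h2 : LinearMap.range ((M s t).mulVecLin) = LinearMap.range (f s m) :=
      rangeConst s t hst (le_of_lt htm)
    rw [h1, h2] at hns
    exact hns
  -- apply bollobas with M' = m - 1
  have hm1 : m - 1 + 1 ≤ m := by omega
  have hbol := bollobas (M' := m - 1) hrd
    (fun i => LinearMap.range (f ((i : ℕ) + 1) m))
    (fun i => LinearMap.ker (f 0 ((i : ℕ) + 1)))
    (fun i => hrk _ m (by omega) le_rfl)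
    (fun i => hkerdim 0 _ (by omega) (by omega))
    (fun i => by rw [inf_comm]; exact diag _ (by omega) (by omega))
    (fun i j hij => by
      rw [inf_comm]
      exact off ((i : ℕ) + 1) ((j : ℕ) + 1) (by omega)
        (by exact_mod_cast Nat.add_lt_add_right hij 1) (by omega))
  have hpow : d ^ r ≤ d ^ d := Nat.pow_le_pow_right (by omega) hrd
  omega

lemma silAux (k : ℕ) {d : ℕ} (n : ℕ) (M : ℕ → ℕ → Matrix (Fin d) (Fin d) ℚ)
    (hmul : ∀ a b c, a ≤ b → b ≤ c → c ≤ n → M a c = M a b * M b c)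
    (hrank : ∀ a b, a < b → b ≤ n → d - k ≤ (M a b).rank)
    (hn : (d ^ d + 2) ^ k ≤ n) :
    ∃ a b, a < b ∧ b ≤ n ∧ MatStable (M a b) := by
  induction k generalizing n M with
  | zero =>
    refine ⟨0, 1, by omega, by simpa using hn, ?_⟩
    have h1 : d ≤ (M 0 1).rank := by simpa using hrank 0 1 (by omega) (by simpa using hn)
    have h2 : (M 0 1).rank ≤ d := by
      have := Matrix.rank_le_card_width (M 0 1)
      simpa using this
    have hkr : finrank ℚ (LinearMap.ker (M 0 1).mulVecLin) = 0 := by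
      have h := LinearMap.finrank_range_add_finrank_ker (M 0 1).mulVecLin
      rw [finrank_pi_fin] at h
      have : finrank ℚ (LinearMap.range (M 0 1).mulVecLin) = d := le_antisymm h2 h1
      omega
    rw [matStable_iff]
    have : LinearMap.ker (M 0 1).mulVecLin = ⊥ := Submodule.finrank_eq_zero.mp hkr
    rw [this, bot_inf_eq]
  | succ k ih =>
    set D := d ^ d with hD
    set L := (D + 2) ^ k with hL
    have hLpos : 1 ≤ L := Nat.one_le_pow _ _ (by omega)
    have hLn : (D + 2) * L ≤ n := by
      rw [hL, ← pow_succ']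
      exact hn
    by_cases hc : ∀ j, j ≤ D + 1 → ∃ a b, a < b ∧ b ≤ L ∧
        (M (j * L + a) (j * L + b)).rank ≤ d - (k + 1)
    · -- all blocks contain a low-rank interval
      rcases Nat.eq_zero_or_pos (d - (k + 1)) with hr0 | hrpos
      · obtain ⟨a, b, hab, hbL, hrk0⟩ := hc 0 (by omega)
        simp only [zero_mul, zero_add] at hrk0
        have hbn : b ≤ n := le_trans (le_trans hbL (Nat.le_mul_of_pos_left L (by omega))) hLn
        refine ⟨a, b, hab, hbn, matStable_of_rank_zero (by omega)⟩
      · set r := d - (k + 1) with hr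
        have hrkeq : ∀ i j, i < j → j ≤ D + 2 → (M (i * L) (j * L)).rank = r := by
          intro i j hij hj
          have hub : j * L ≤ n := by
            calc j * L ≤ (D + 2) * L := Nat.mul_le_mul_right L hj
            _ ≤ n := hLn
          refine le_antisymm ?_ ?_
          · obtain ⟨a, b, hab, hbL, hrk0⟩ := hc i (by omega)
            have h1 : i * L ≤ i * L + a := by omega
            have h2 : i * L + a ≤ i * L + b := by omega
            have h3 : i * L + b ≤ j * L := by
              have : i * L + b ≤ i * L + L := by omega
              have h4 : i * L + L = (i + 1) * L := by ring
              have h5 : (i + 1) * L ≤ j * L := Nat.mul_le_mul_right L (by omega)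
              omega
            have e1 : M (i * L) (j * L)
                = M (i * L) (i * L + a) * (M (i * L + a) (i * L + b) * M (i * L + b) (j * L)) := by
              rw [← hmul _ _ _ h2 h3 hub, ← hmul _ _ _ h1 (le_trans h2 h3) hub]
            rw [e1]
            calc (M (i * L) (i * L + a) * (M (i * L + a) (i * L + b) * M (i * L + b) (j * L))).rank
                ≤ (M (i * L + a) (i * L + b) * M (i * L + b) (j * L)).rank :=
                  Matrix.rank_mul_le_right _ _
              _ ≤ (M (i * L + a) (i * L + b)).rank := Matrix.rank_mul_le_left _ _
              _ ≤ r := hrk0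
          · have := hrank (i * L) (j * L)
              ((Nat.mul_lt_mul_right (by omega : 0 < L)).mpr hij) hub
            omega
        have := equalRank (d := d) (r := r) (m := D + 2) hrpos (by omega)
          (fun a b => M (a * L) (b * L))
          (fun a b c hab hbc hcm => by
            refine hmul _ _ _ (Nat.mul_le_mul_right L hab) (Nat.mul_le_mul_right L hbc) ?_
            calc c * L ≤ (D + 2) * L := Nat.mul_le_mul_right L hcm
            _ ≤ n := hLn)
          hrkeq
        obtain ⟨a, b, hab, hbm, hst⟩ := this
        refine ⟨a * L, b * L, ?_, ?_, hst⟩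
        · exact (Nat.mul_lt_mul_right (by omega : 0 < L)).mpr hab
        · calc b * L ≤ (D + 2) * L := Nat.mul_le_mul_right L hbm
          _ ≤ n := hLn
    · -- some block has all intervals of rank ≥ d - k
      push_neg at hc
      obtain ⟨j, hj, hblk⟩ := hc
      have hjL : j * L + L ≤ n := by
        have : (j + 1) * L ≤ (D + 2) * L := Nat.mul_le_mul_right L (by omega)
        have h2 : (j + 1) * L = j * L + L := by ring
        omega
      have := ih L (fun a b => M (j * L + a) (j * L + b))
        (fun a b c hab hbc hcm => hmul _ _ _ (by omega) (by omega) (by omega))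
        (fun a b hab hbL => by
          show d - k ≤ (M (j * L + a) (j * L + b)).rank
          have := hblk a b hab hbL
          omega)
        le_rfl
      obtain ⟨a, b, hab, hbL, hst⟩ := this
      exact ⟨j * L + a, j * L + b, by omega, by omega, hst⟩

theorem stableInterval {d : ℕ} (n : ℕ) (M : ℕ → ℕ → Matrix (Fin d) (Fin d) ℚ)
    (hmul : ∀ a b c, a ≤ b → b ≤ c → c ≤ n → M a c = M a b * M b c)
    (hn : (d ^ d + 2) ^ d ≤ n) :
    ∃ a b, a < b ∧ b ≤ n ∧ MatStable (M a b) :=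
  silAux d n M hmul (fun a b _ _ => by omega) hn



variable {α : Type*}

lemma regular_inter {X Y : Set (List α)} (hX : Language.IsRegular (X : Language α))
    (hY : Language.IsRegular (Y : Language α)) :
    Language.IsRegular ((X ∩ Y : Set (List α)) : Language α) := by
  obtain ⟨σ1, i1, M1, hM1⟩ := hX
  obtain ⟨σ2, i2, M2, hM2⟩ := hY
  refine ⟨σ1 × σ2, by infer_instance, ⟨fun s a => (M1.step s.1 a, M2.step s.2 a),
    (M1.start, M2.start), {s | s.1 ∈ M1.accept ∧ s.2 ∈ M2.accept}⟩, ?_⟩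
  have hev : ∀ (w : List α) (s : σ1 × σ2),
      DFA.evalFrom ⟨fun s a => (M1.step s.1 a, M2.step s.2 a),
        (M1.start, M2.start), {s | s.1 ∈ M1.accept ∧ s.2 ∈ M2.accept}⟩ s w
        = (M1.evalFrom s.1 w, M2.evalFrom s.2 w) := by
    intro w
    induction w with
    | nil => intro s; rfl
    | cons a t ih => intro s; exact ih (M1.step s.1 a, M2.step s.2 a)
  ext w
  have := hev w (M1.start, M2.start)
  constructor
  · intro hw
    have hw' : _ ∈ _ := hw
    rw [DFA.mem_accepts] at hw'
    rw [DFA.eval, this] at hw'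
    exact ⟨by rw [← hM1]; exact hw'.1, by rw [← hM2]; exact hw'.2⟩
  · rintro ⟨h1, h2⟩
    rw [← hM1] at h1
    rw [← hM2] at h2
    show _ ∈ _
    rw [DFA.mem_accepts, DFA.eval, this]
    exact ⟨h1, h2⟩

lemma regular_reverse {X : Set (List α)} (hX : Language.IsRegular (X : Language α)) :
    Language.IsRegular (({w | w.reverse ∈ X} : Set (List α)) : Language α) := by
  classical
  obtain ⟨σ, iσ, M, hM⟩ := hX
  let N : NFA α σ := ⟨fun s a => {t | M.step t a = s}, M.accept, {M.start}⟩
  have hev : ∀ (w : List α) (S : Set σ),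
      N.evalFrom S w = {t | M.evalFrom t w.reverse ∈ S} := by
    intro w
    induction w with
    | nil => intro S; ext t; simp [NFA.evalFrom]
    | cons a u ih =>
      intro S
      show N.evalFrom (N.stepSet S a) u = _
      rw [ih]
      ext t
      simp only [Set.mem_setOf_eq]
      rw [NFA.mem_stepSet, List.reverse_cons, DFA.evalFrom_append_singleton]
      constructor
      · rintro ⟨p, hp, hstep⟩
        have hq : M.step (M.evalFrom t u.reverse) a = p := hstep
        rw [hq]; exact hp
      · intro h
        exact ⟨_, h, rfl⟩
  have hacc : N.accepts = {w | w.reverse ∈ X} := by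
    ext w
    rw [NFA.mem_accepts]
    show (∃ S ∈ ({M.start} : Set σ), S ∈ N.evalFrom N.start w) ↔ _
    rw [hev]
    simp only [Set.mem_singleton_iff, Set.mem_setOf_eq]
    constructor
    · rintro ⟨S, hS, hmem⟩
      rw [hS] at hmem
      rw [← hM]
      exact hmem
    · intro h
      rw [← hM] at h
      exact ⟨M.start, rfl, h⟩
  refine ⟨Set σ, by infer_instance, N.toDFA, ?_⟩
  rw [NFA.toDFA_correct, hacc]



variable {α : Type*}

/-- words whose prefixes stay nonnegative until (if ever) the weight first
reaches `N`; after that, anything goes. -/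
def covThresh (N : ℕ) (ω : List α → ℤ) : Set (List α) :=
  {w | ∀ i ≤ w.length, ω (w.take i) < 0 → ∃ e < i, (N : ℤ) ≤ ω (w.take e)}

open Classical in
/-- the step function of the threshold automaton. -/
noncomputable def tstep (N : ℕ) (ω : List α → ℤ) :
    Option (Fin (N + 1)) → α → Option (Fin (N + 1))
  | none, _ => none
  | some k, a =>
    if (k : ℕ) = N then some k
    else if h : 0 ≤ (k : ℤ) + ω [a] ∧ (k : ℤ) + ω [a] ≤ (N : ℤ) then
      some ⟨((k : ℤ) + ω [a]).toNat, by omega⟩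
    else none

noncomputable def tDFA (N : ℕ) (ω : List α → ℤ) : DFA α (Option (Fin (N + 1))) :=
  ⟨tstep N ω, some ⟨0, by omega⟩, {s | s ≠ none}⟩

section Thresh

variable (N : ℕ) (ω : List α → ℤ)
  (hω_nil : ω [] = 0) (hω_app : ∀ u v : List α, ω (u ++ v) = ω u + ω v)
  (hω_letter : ∀ σ : α, ω [σ] = -1 ∨ ω [σ] = 0 ∨ ω [σ] = 1)
  (hN : 1 ≤ N)

/-- `bad u`: some prefix dips below zero before the threshold was ever reached. -/
def tbad (u : List α) : Prop :=
  ∃ i, i ≤ u.length ∧ ω (u.take i) < 0 ∧ ∀ e < i, ω (u.take e) < (N : ℤ)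

include hω_nil hω_app hω_letter hN in
lemma tDFA_inv (u : List α) :
    (tbad N ω u ∧ (tDFA N ω).eval u = none) ∨
    (¬ tbad N ω u ∧ (∃ e ≤ u.length, (N : ℤ) ≤ ω (u.take e)) ∧
      (tDFA N ω).eval u = some ⟨N, by omega⟩) ∨
    ((∀ i ≤ u.length, 0 ≤ ω (u.take i) ∧ ω (u.take i) < (N : ℤ)) ∧
      ∃ k : Fin (N + 1), (tDFA N ω).eval u = some k ∧ (k : ℤ) = ω u) := by
  induction u using List.reverseRecOn with
  | nil =>
    refine Or.inr (Or.inr ⟨?_, ⟨0, by omega⟩, rfl, by simpa using hω_nil.symm⟩)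
    intro i hi
    rw [List.take_nil, hω_nil]
    constructor <;> omega
  | append_singleton u a ih =>
    have htake : ∀ i ≤ u.length, (u ++ [a]).take i = u.take i := fun i hi =>
      List.take_append_of_le_length hi
    have htakeall : (u ++ [a]).take (u.length + 1) = u ++ [a] := by
      rw [List.take_of_length_le (by simp)]
    have heval : (tDFA N ω).eval (u ++ [a]) = tstep N ω ((tDFA N ω).eval u) a :=
      DFA.eval_append_singleton _ _ _
    rcases ih with ⟨hbad, he⟩ | ⟨hnbad, ⟨e, he_le, he_ge⟩, he⟩ | ⟨hbnd, k, he, hk⟩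
    · -- dead stays dead
      refine Or.inl ⟨?_, by rw [heval, he]; rfl⟩
      obtain ⟨i, hi, hneg, hall⟩ := hbad
      exact ⟨i, by simp; omega, by rwa [htake i hi],
        fun e hei => by rw [htake e (by omega)]; exact hall e hei⟩
    · -- high stays high
      have hstep : tstep N ω (some (⟨N, by omega⟩ : Fin (N + 1))) a
          = some ⟨N, by omega⟩ := by
        simp [tstep]
      refine Or.inr (Or.inl ⟨?_, ⟨e, by simp; omega, by rwa [htake e he_le]⟩,
        by rw [heval, he, hstep]⟩)
      rintro ⟨i, hi, hneg, hall⟩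
      simp only [List.length_append, List.length_singleton] at hi
      by_cases hiu : i ≤ u.length
      · rw [htake i hiu] at hneg
        exact hnbad ⟨i, hiu, hneg, fun e' he' => by
          rw [← htake e' (by omega)]; exact hall e' he'⟩
      · have := hall e (by omega)
        rw [htake e he_le] at this
        omega
    · -- low state: counter is exact
      have hku : (k : ℤ) = ω u := hk
      have hkN : (k : ℕ) ≠ N := by
        have := (hbnd u.length le_rfl).2
        rw [List.take_length] at this
        omega
      have hz : ω (u ++ [a]) = ω u + ω [a] := hω_app u [a]
      have hlet := hω_letter a
      set z : ℤ := (k : ℤ) + ω [a] with hzdef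
      have hzval : z = ω (u ++ [a]) := by rw [hz]; omega
      have hstep0 : tstep N ω (some k) a
          = if h : 0 ≤ z ∧ z ≤ (N : ℤ) then some ⟨z.toNat, by omega⟩ else none := by
        simp [tstep, hkN]
        rfl
      rcases lt_or_ge z 0 with hzneg | hznn
      · -- dies now
        refine Or.inl ⟨⟨u.length + 1, by simp, by rw [htakeall]; omega, ?_⟩,
          by rw [heval, he, hstep0, dif_neg (by omega)]⟩
        intro e' he'
        rw [htake e' (by omega)]
        exact (hbnd e' (by omega)).2
      · rcases lt_or_ge z (N : ℤ) with hzlt | hzge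
        · -- still low
          refine Or.inr (Or.inr ⟨?_, ⟨z.toNat, by omega⟩, ?_, ?_⟩)
          · intro i hi
            simp only [List.length_append, List.length_singleton] at hi
            by_cases hiu : i ≤ u.length
            · rw [htake i hiu]; exact hbnd i hiu
            · have : i = u.length + 1 := by omega
              rw [this, htakeall]
              omega
          · rw [heval, he, hstep0]
            simp only [hznn, true_and]
            rw [dif_pos (by omega)]
          · show ((z.toNat : ℕ) : ℤ) = ω (u ++ [a])
            omega
        · -- reaches the threshold now
          have hzN : z = (N : ℤ) := by
            rcases hlet with h | h | h <;> rw [h] at hzdef <;>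
              · have := (hbnd u.length le_rfl).2
                rw [List.take_length] at this
                omega
          refine Or.inr (Or.inl ⟨?_, ⟨u.length + 1, by simp, by rw [htakeall]; omega⟩, ?_⟩)
          · rintro ⟨i, hi, hneg, hall⟩
            simp only [List.length_append, List.length_singleton] at hi
            by_cases hiu : i ≤ u.length
            · rw [htake i hiu] at hneg
              exact absurd hneg (by have := (hbnd i hiu).1; omega)
            · have : i = u.length + 1 := by omega
              rw [this, htakeall] at hneg
              omega
          · rw [heval, he, hstep0]
            rw [dif_pos (by omega)]
            congr 1
            ext
            simp
            omega

include hω_nil hω_app hω_letter hN in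
theorem tDFA_accepts (w : List α) :
    w ∈ (tDFA N ω).accepts ↔ w ∈ covThresh N ω := by
  have hinv := tDFA_inv N ω hω_nil hω_app hω_letter hN w
  have hmem : w ∈ (tDFA N ω).accepts ↔ (tDFA N ω).eval w ≠ none := Iff.rfl
  have hnbad_iff : ¬ tbad N ω w ↔ w ∈ covThresh N ω := by
    rw [tbad, covThresh]
    push_neg
    constructor
    · intro h i hi hneg
      obtain ⟨e, he, hNe⟩ := h i hi hneg
      exact ⟨e, he, by omega⟩
    · intro h i hi hneg
      obtain ⟨e, he, hNe⟩ := h i hi hneg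
      exact ⟨e, he, by omega⟩
  rcases hinv with ⟨hbad, he⟩ | ⟨hnbad, _, he⟩ | ⟨hbnd, k, he, hk⟩
  · rw [hmem, he]
    simp only [ne_eq, not_true_eq_false, false_iff]
    rw [← hnbad_iff]
    simp [hbad]
  · rw [hmem, he]
    simp only [ne_eq, reduceCtorEq, not_false_eq_true, true_iff]
    exact hnbad_iff.mp hnbad
  · rw [hmem, he]
    simp only [ne_eq, reduceCtorEq, not_false_eq_true, true_iff]
    rw [← hnbad_iff]
    rintro ⟨i, hi, hneg, -⟩
    exact absurd hneg (by have := (hbnd i hi).1; omega)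

end Thresh



variable {α : Type*}

def extract (w : List α) (i j : ℕ) : List α := (w.take j).drop i

lemma take_add_extract (w : List α) {i j : ℕ} (hij : i ≤ j) :
    w.take j = w.take i ++ extract w i j := by
  rw [extract]
  conv_lhs => rw [← List.take_append_drop i (w.take j)]
  rw [List.take_take, min_eq_left hij]

lemma extract_append (w : List α) {i j k : ℕ} (hij : i ≤ j) (hjk : j ≤ k) :
    extract w i j ++ extract w j k = extract w i k := by
  have h1 := take_add_extract w (le_trans hij hjk)
  have h2 := take_add_extract w hjk
  have h3 := take_add_extract w hij
  rw [h3, List.append_assoc] at h2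
  rw [h2] at h1
  exact List.append_cancel_left h1

lemma extract_append_drop (w : List α) {i j : ℕ} (hij : i ≤ j) :
    extract w i j ++ w.drop j = w.drop i := by
  have h1 := List.take_append_drop j w
  conv_rhs at h1 => rw [← List.take_append_drop i w]
  rw [take_add_extract w hij, List.append_assoc] at h1
  exact List.append_cancel_left h1

section OmegaFacts

variable (ω : List α → ℤ)
  (hω_nil : ω [] = 0) (hω_app : ∀ u v : List α, ω (u ++ v) = ω u + ω v)

include hω_app in
lemma omega_reverse : ∀ u : List α, ω u.reverse = ω u := by
  intro u
  induction u with
  | nil => rfl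
  | cons a t ih =>
    have h1 : ω (a :: t) = ω [a] + ω t := hω_app [a] t
    have h2 : ω ((a :: t).reverse) = ω t.reverse + ω [a] := by
      rw [List.reverse_cons]
      exact hω_app t.reverse [a]
    omega

include hω_app in
lemma omega_extract (w : List α) {i j : ℕ} (hij : i ≤ j) :
    ω (extract w i j) = ω (w.take j) - ω (w.take i) := by
  have h2 : ω (w.take j) = ω (w.take i) + ω (extract w i j) := by
    conv_lhs => rw [take_add_extract w hij]
    exact hω_app _ _
  omega

include hω_app in
lemma omega_take_drop (w : List α) (m : ℕ) :
    ω (w.take m) + ω (w.drop m) = ω w := by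
  rw [← hω_app, List.take_append_drop]

variable (hω_letter : ∀ σ : α, ω [σ] = -1 ∨ ω [σ] = 0 ∨ ω [σ] = 1)

include hω_letter hω_app in
lemma omega_take_step (w : List α) (i : ℕ) :
    ω (w.take (i + 1)) ≤ ω (w.take i) + 1 := by
  by_cases h : i < w.length
  · rw [List.take_succ, List.getElem?_eq_getElem h]
    have := hω_app (w.take i) [w[i]]
    simp only [Option.toList_some] at *
    rw [this]
    have := hω_letter w[i]
    omega
  · rw [List.take_of_length_le (by omega), List.take_of_length_le (by omega)]
    omega

end OmegaFacts

lemma ivt (g : ℕ → ℤ) (hstep : ∀ i, g (i + 1) ≤ g i + 1) (a b : ℕ) (hab : a ≤ b)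
    (t : ℤ) (ha : g a ≤ t) (hb : t ≤ g b) : ∃ i, a ≤ i ∧ i ≤ b ∧ g i = t := by
  have hex : ∃ n, a ≤ n ∧ n ≤ b ∧ t ≤ g n := ⟨b, hab, le_rfl, hb⟩
  classical
  obtain ⟨hia, hib, hit⟩ := Nat.find_spec hex
  refine ⟨Nat.find hex, hia, hib, ?_⟩
  by_contra hne
  have hgt : t < g (Nat.find hex) := lt_of_le_of_ne hit (fun h => hne h.symm)
  have hia' : a < Nat.find hex := by
    rcases eq_or_lt_of_le hia with h | h
    · exfalso; rw [h] at ha; omega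
    · exact h
  have hmin := Nat.find_min hex (m := Nat.find hex - 1) (by omega)
  push_neg at hmin
  have h1 : g (Nat.find hex - 1) < t := hmin (by omega) (by omega)
  have h2 := hstep (Nat.find hex - 1)
  have h3 : Nat.find hex - 1 + 1 = Nat.find hex := by omega
  rw [h3] at h2
  omega

section Extract

variable (ω : List α → ℤ)
  (hω_nil : ω [] = 0) (hω_app : ∀ u v : List α, ω (u ++ v) = ω u + ω v)
  (hω_letter : ∀ σ : α, ω [σ] = -1 ∨ ω [σ] = 0 ∨ ω [σ] = 1)

include hω_nil hω_app hω_letter in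
lemma extract_positions (N : ℕ) (w : List α) (hw : w ∈ covThresh N ω)
    (f : ℕ) (hf : f ≤ w.length) (hfneg : ω (w.take f) < 0)
    (hfmin : ∀ j, j < f → 0 ≤ ω (w.take j)) :
    ∃ p : ℕ → ℕ, (∀ a b, a < b → b ≤ N → p a < p b) ∧ p N < f ∧
      (∀ l, l ≤ N → ω (w.take (p l)) = (l : ℤ)) ∧
      (∀ i, i ≤ p N → 0 ≤ ω (w.take i)) := by
  classical
  obtain ⟨e, hef, heN⟩ := hw f hf hfneg
  set g : ℕ → ℤ := fun i => ω (w.take i) with hg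
  have hgstep : ∀ i, g (i + 1) ≤ g i + 1 := fun i => omega_take_step ω hω_app hω_letter w i
  have hg0 : g 0 = 0 := by simp [hg, hω_nil]
  have hglobal : ∀ l : ℕ, ∃ i, (g i = (l : ℤ) ∨ (N : ℤ) < (l : ℤ)) := by
    intro l
    rcases le_or_gt (l : ℤ) (N : ℤ) with hl | hl
    · obtain ⟨i, _, _, hgi⟩ := ivt g hgstep 0 e (by omega) (l : ℤ) (by omega)
        (le_trans hl heN)
      exact ⟨i, Or.inl hgi⟩
    · exact ⟨0, Or.inr hl⟩
  set p : ℕ → ℕ := fun l => Nat.find (hglobal l) with hp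
  have hval : ∀ l, l ≤ N → g (p l) = (l : ℤ) := by
    intro l hl
    have := Nat.find_spec (hglobal l)
    rcases this with h | h
    · exact h
    · exfalso; omega
  have hple : ∀ l, l ≤ N → p l ≤ e := by
    intro l hl
    obtain ⟨i, _, hie, hgi⟩ := ivt g hgstep 0 e (by omega) (l : ℤ) (by omega)
      (le_trans (by exact_mod_cast hl) heN)
    exact le_trans (Nat.find_min' (hglobal l) (Or.inl hgi)) hie
  have hmono : ∀ a b, a < b → b ≤ N → p a < p b := by
    intro a b hab hbN
    have hvb : g (p b) = (b : ℤ) := hval b hbN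
    obtain ⟨i, _, hipb, hgi⟩ := ivt g hgstep 0 (p b) (by omega) (a : ℤ) (by omega)
      (by rw [hvb]; exact_mod_cast le_of_lt hab)
    have hle : p a ≤ p b := le_trans (Nat.find_min' (hglobal a) (Or.inl hgi)) hipb
    rcases eq_or_lt_of_le hle with h | h
    · exfalso
      have := hval a (by omega)
      rw [h, hvb] at this
      have : (a : ℤ) = (b : ℤ) := by omega
      exact absurd (by exact_mod_cast this) (Nat.ne_of_lt hab)
    · exact h
  refine ⟨p, hmono, by have := hple N le_rfl; omega, hval, ?_⟩
  intro i hi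
  have : i < f := by have := hple N le_rfl; omega
  exact hfmin i this

end Extract


end RRA

open RRA

/-- For monoid morphisms `φ : Σ* → M_d(ℚ)` and `ω : Σ* → ℤ` (with letter weights in
`{-1,0,1}`), there is a regular language `L_A` such that, setting
`L' = L_A ∩ L_Z(ω)`, we have `L_R(ω) ⊆ L'` and every word `w ∈ L' \ L_R(ω)` factors as
`w = w₁ u w₂ v w₃` where `φ(u)` is stable, `ω(u) > 0`, every prefix of `w₁u` has
nonnegative weight, `φ(v)` is stable, `ω(v) < 0`, and every suffix of `v w₃` has
nonpositive weight. -/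
theorem reach_regular_approximation {α : Type*} [Fintype α] (d : ℕ)
    (φ : List α → Matrix (Fin d) (Fin d) ℚ)
    (hφ_nil : φ [] = 1) (hφ_app : ∀ u v : List α, φ (u ++ v) = φ u * φ v)
    (ω : List α → ℤ)
    (hω_nil : ω [] = 0) (hω_app : ∀ u v : List α, ω (u ++ v) = ω u + ω v)
    (hω_letter : ∀ σ : α, ω [σ] = -1 ∨ ω [σ] = 0 ∨ ω [σ] = 1) :
    ∃ LA : Set (List α), Language.IsRegular (LA : Language α) ∧
      reachLang ω ⊆ LA ∩ zeroLang ω ∧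
      ∀ w ∈ (LA ∩ zeroLang ω) \ reachLang ω,
        ∃ w₁ u w₂ v w₃ : List α, w = w₁ ++ u ++ w₂ ++ v ++ w₃ ∧
          (MatStable (φ u) ∧ 0 < ω u ∧ ∀ p : List α, p <+: (w₁ ++ u) → 0 ≤ ω p) ∧
          (MatStable (φ v) ∧ ω v < 0 ∧ ∀ s : List α, s <:+ (v ++ w₃) → ω s ≤ 0) := by
  classical
  set N : ℕ := (d ^ d + 2) ^ d with hNdef
  have hN : 1 ≤ N := Nat.one_le_pow _ _ (by omega)
  set ω' : List α → ℤ := fun u => -ω u.reverse with hω'def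
  have hω'_nil : ω' [] = 0 := by simp [hω'def, hω_nil]
  have hω'_app : ∀ u v : List α, ω' (u ++ v) = ω' u + ω' v := by
    intro u v
    simp only [hω'def, List.reverse_append, hω_app]
    ring
  have hω'_letter : ∀ σ : α, ω' [σ] = -1 ∨ ω' [σ] = 0 ∨ ω' [σ] = 1 := by
    intro σ
    have := hω_letter σ
    simp only [hω'def, List.reverse_singleton]
    omega
  -- translation between suffixes of w and prefixes of w.reverse
  have hrevtake : ∀ (w : List α) (i : ℕ), i ≤ w.length →
      (w.reverse.take i).reverse = w.drop (w.length - i) := by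
    intro w i hi
    have h := List.reverse_drop (l := w) (i := w.length - i)
    have h2 : w.length - (w.length - i) = i := by omega
    rw [h2] at h
    rw [← h, List.reverse_reverse]
  have hdropval : ∀ (w : List α), ω w = 0 → ∀ i ≤ w.length,
      ω (w.drop (w.length - i)) = - ω' (w.reverse.take i) := by
    intro w hwz i hi
    have h1 : ω ((w.reverse.take i).reverse) = ω (w.drop (w.length - i)) := by
      rw [hrevtake w i hi]
    simp only [hω'def]
    omega
  refine ⟨covThresh N ω ∩ {w | w.reverse ∈ covThresh N ω'}, ?_, ?_, ?_⟩
  · -- regularity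
    apply regular_inter
    · exact ⟨Option (Fin (N + 1)), inferInstance, tDFA N ω,
        Set.ext fun w => tDFA_accepts N ω hω_nil hω_app hω_letter hN w⟩
    · apply regular_reverse
      exact ⟨Option (Fin (N + 1)), inferInstance, tDFA N ω',
        Set.ext fun w => tDFA_accepts N ω' hω'_nil hω'_app hω'_letter hN w⟩
  · -- reachLang is included
    rintro w ⟨hwz, hwpre⟩
    have hpre : ∀ i : ℕ, 0 ≤ ω (w.take i) := fun i => hwpre _ (List.take_prefix i w)
    refine ⟨⟨?_, ?_⟩, hwz⟩
    · intro i hi hneg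
      exact absurd hneg (by have := hpre i; omega)
    · intro i hi hneg
      exfalso
      rw [List.length_reverse] at hi
      have h1 := hdropval w hwz i hi
      have h2 := omega_take_drop ω hω_app w (w.length - i)
      have h3 := hpre (w.length - i)
      omega
  · -- the factorization of bad words
    rintro w ⟨⟨⟨hw1, hw2⟩, hwz⟩, hwnr⟩
    have hwz : ω w = 0 := hwz
    -- there is a dipping prefix
    have hfex : ∃ i, i ≤ w.length ∧ ω (w.take i) < 0 := by
      by_contra hnd
      push_neg at hnd
      apply hwnr
      refine ⟨hwz, ?_⟩
      intro u hu
      have h1 : u = w.take u.length := List.prefix_iff_eq_take.mp hu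
      rw [h1]
      exact hnd u.length hu.length_le
    obtain ⟨hflen, hfneg⟩ := Nat.find_spec hfex
    have hfmin : ∀ j, j < Nat.find hfex → 0 ≤ ω (w.take j) := by
      intro j hj
      have h := Nat.find_min hfex hj
      push_neg at h
      exact h (by omega)
    obtain ⟨p, hpmono, hpf, hpval, hpnn⟩ :=
      extract_positions ω hω_nil hω_app hω_letter N w hw1 (Nat.find hfex)
        hflen hfneg hfmin
    have hpmono' : ∀ a b, a ≤ b → b ≤ N → p a ≤ p b := by
      intro a b hab hbN
      rcases eq_or_lt_of_le hab with h | h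
      · rw [h]
      · exact le_of_lt (hpmono a b h hbN)
    -- dip of the reversed word
    have hdip' : ∃ i, i ≤ w.reverse.length ∧ ω' (w.reverse.take i) < 0 := by
      refine ⟨w.length - Nat.find hfex, by rw [List.length_reverse]; omega, ?_⟩
      have h1 := hdropval w hwz (w.length - Nat.find hfex) (by omega)
      have h2 : w.length - (w.length - Nat.find hfex) = Nat.find hfex := by omega
      rw [h2] at h1
      have h3 := omega_take_drop ω hω_app w (Nat.find hfex)
      omega
    obtain ⟨hf'len, hf'neg⟩ := Nat.find_spec hdip'
    have hf'min : ∀ j, j < Nat.find hdip' → 0 ≤ ω' (w.reverse.take j) := by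
      intro j hj
      have h := Nat.find_min hdip' hj
      push_neg at h
      exact h (by omega)
    have hF'le : Nat.find hdip' ≤ w.length - Nat.find hfex := by
      apply Nat.find_min'
      refine ⟨by rw [List.length_reverse]; omega, ?_⟩
      have h1 := hdropval w hwz (w.length - Nat.find hfex) (by omega)
      have h2 : w.length - (w.length - Nat.find hfex) = Nat.find hfex := by omega
      rw [h2] at h1
      have h3 := omega_take_drop ω hω_app w (Nat.find hfex)
      omega
    obtain ⟨P, hPmono, hPf', hPval, hPnn⟩ :=
      extract_positions ω' hω'_nil hω'_app hω'_letter N w.reverse hw2 (Nat.find hdip')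
        hf'len hf'neg hf'min
    have hPmono' : ∀ a b, a ≤ b → b ≤ N → P a ≤ P b := by
      intro a b hab hbN
      rcases eq_or_lt_of_le hab with h | h
      · rw [h]
      · exact le_of_lt (hPmono a b h hbN)
    have hwrevlen : w.reverse.length = w.length := List.length_reverse
    have hPlen : ∀ l, l ≤ N → P l ≤ w.length := by
      intro l hl
      have h1 : P l ≤ P N := hPmono' l N hl le_rfl
      omega
    have hplen : ∀ l, l ≤ N → p l ≤ w.length := by
      intro l hl
      have h1 : p l ≤ p N := hpmono' l N hl le_rfl
      omega
    set q : ℕ → ℕ := fun l => w.length - P (N - l) with hqdef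
    have hqmono : ∀ a b, a ≤ b → b ≤ N → q a ≤ q b := by
      intro a b hab hbN
      have h1 : P (N - b) ≤ P (N - a) := hPmono' (N - b) (N - a) (by omega) (by omega)
      simp only [hqdef]
      omega
    have hqlen : ∀ l, l ≤ N → q l ≤ w.length := by
      intro l hl
      simp only [hqdef]
      omega
    have hqval : ∀ l, l ≤ N → ω (w.take (q l)) = ((N : ℤ) - (l : ℤ)) := by
      intro l hl
      have h1 := hdropval w hwz (P (N - l)) (hPlen (N - l) (by omega))
      have h2 : w.length - P (N - l) = q l := rfl
      rw [h2] at h1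
      have h3 := hPval (N - l) (by omega)
      rw [h3] at h1
      have h4 := omega_take_drop ω hω_app w (q l)
      push_cast at h1 ⊢
      omega
    -- the stable ascending factor
    obtain ⟨a, b, hab, hbN, hstab⟩ := stableInterval (d := d) N
      (fun a b => φ (extract w (p a) (p b)))
      (fun a b c hab hbc hcN => by
        show φ (extract w (p a) (p c)) = _
        rw [← extract_append w (hpmono' a b hab (le_trans hbc hcN))
          (hpmono' b c hbc hcN), hφ_app])
      (le_of_eq hNdef.symm)
    -- the stable descending factor
    obtain ⟨a', b', hab', hb'N, hstab'⟩ := stableInterval (d := d) N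
      (fun a b => φ (extract w (q a) (q b)))
      (fun a b c hab hbc hcN => by
        show φ (extract w (q a) (q c)) = _
        rw [← extract_append w (hqmono a b hab (le_trans hbc hcN))
          (hqmono b c hbc hcN), hφ_app])
      (le_of_eq hNdef.symm)
    have hpapb : p a ≤ p b := le_of_lt (hpmono a b hab hbN)
    have hqaqb : q a' ≤ q b' := hqmono a' b' (le_of_lt hab') hb'N
    have horder : p b ≤ q a' := by
      have h1 : p b ≤ p N := hpmono' b N hbN le_rfl
      have h2 : P (N - a') ≤ P N := hPmono' (N - a') N (by omega) le_rfl
      simp only [hqdef]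
      omega
    refine ⟨w.take (p a), extract w (p a) (p b), extract w (p b) (q a'),
      extract w (q a') (q b'), w.drop (q b'), ?_, ⟨hstab, ?_, ?_⟩, ⟨hstab', ?_, ?_⟩⟩
    · -- decomposition
      have e1 : w.take (p a) ++ extract w (p a) (p b) = w.take (p b) :=
        (take_add_extract w hpapb).symm
      have e2 : w.take (p b) ++ extract w (p b) (q a') = w.take (q a') :=
        (take_add_extract w horder).symm
      have e3 : w.take (q a') ++ extract w (q a') (q b') = w.take (q b') :=
        (take_add_extract w hqaqb).symm
      rw [e1, e2, e3]
      exact (List.take_append_drop _ w).symm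
    · -- positive weight of u
      have h1 := hpval a (by omega)
      have h2 := hpval b hbN
      have h3 := omega_extract ω hω_app w hpapb
      rw [h1, h2] at h3
      have : (a : ℤ) < (b : ℤ) := by exact_mod_cast hab
      omega
    · -- prefixes of w₁ ++ u are nonnegative
      intro pr hpr
      rw [(take_add_extract w hpapb).symm] at hpr
      have h1 : pr = (w.take (p b)).take pr.length := List.prefix_iff_eq_take.mp hpr
      rw [List.take_take] at h1
      have h2 : min pr.length (p b) ≤ p N := le_trans (min_le_right _ _)
        (hpmono' b N hbN le_rfl)
      rw [h1]
      exact hpnn _ h2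
    · -- negative weight of v
      have h1 := hqval a' (by omega)
      have h2 := hqval b' hb'N
      have h3 := omega_extract ω hω_app w hqaqb
      rw [h1, h2] at h3
      have : (a' : ℤ) < (b' : ℤ) := by exact_mod_cast hab'
      omega
    · -- suffixes of v ++ w₃ are nonpositive
      intro s hs
      rw [extract_append_drop w hqaqb] at hs
      obtain ⟨t, hts⟩ := hs
      have hs' : s = w.drop (q a' + t.length) := by
        have h1 : (w.drop (q a')).drop t.length = w.drop (q a' + t.length) :=
          List.drop_drop
        rw [← h1, ← hts, List.drop_left]
      by_cases hm : q a' + t.length ≤ w.length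
      · have h1 := hdropval w hwz (w.length - (q a' + t.length)) (by omega)
        have h2 : w.length - (w.length - (q a' + t.length)) = q a' + t.length := by
          omega
        rw [h2] at h1
        have hle : w.length - (q a' + t.length) ≤ P N := by
          have h3 : P (N - a') ≤ P N := hPmono' (N - a') N (by omega) le_rfl
          have h4 : P (N - a') ≤ w.length := hPlen (N - a') (by omega)
          simp only [hqdef] at hm ⊢
          omega
        have h5 := hPnn _ hle
        rw [hs']
        omega
      · have : s = [] := by
          rw [hs']
          exact List.drop_eq_nil_of_le (by omega)
        rw [this, hω_nil]
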